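/- Let δ be real, ε ≠ 0, c ∈ ℝ and σ ∈ {1, −1}, and define x₁(t) := σt/(√3 ε) + c. Then 𝔰(t) = 2/3 for all t, Φ(𝔰(t)) = 0, and x₁ satisfies the BH-minimal equation at every t with Q(t) ≠ 0. -/

import Mathlib

/-- The volume-ratio function of the Busemann–Hausdorff volume form in dimension `n = 2`. -/
noncomputable def PhiBH (s : ℝ) : ℝ := (3 * s - 2) / s ^ 2

/-- The derivative of `PhiBH`. -/
noncomputable def PhiBH' (s : ℝ) : ℝ := (4 - 3 * s) / s ^ 3

/-- For `x₁(t) = σt/(√3 ε) + c` one has `𝔰 ≡ 2/3`, `Φ(𝔰) = 0`, and `x₁` satisfies the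
BH-minimal equation wherever `Q ≠ 0`. -/
theorem stmt_2 (δ ε c σ : ℝ) (hε : ε ≠ 0) (hσ : σ = 1 ∨ σ = -1)
    (x₁ : ℝ → ℝ) (hx₁ : ∀ t, x₁ t = σ * t / (Real.sqrt 3 * ε) + c) :
    (∀ t : ℝ, 1 - ε ^ 2 * deriv x₁ t ^ 2 = 2 / 3) ∧
    (∀ t : ℝ, PhiBH (1 - ε ^ 2 * deriv x₁ t ^ 2) = 0) ∧
    (∀ t : ℝ, δ + x₁ t ^ 2 - deriv x₁ t ^ 2 ≠ 0 →
      (x₁ t * deriv (deriv x₁) t + deriv x₁ t ^ 2 - 2 * x₁ t ^ 2 - δ) *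
          PhiBH (1 - ε ^ 2 * deriv x₁ t ^ 2) / (δ + x₁ t ^ 2 - deriv x₁ t ^ 2) +
        2 * ε ^ 2 * x₁ t * deriv (deriv x₁) t * PhiBH' (1 - ε ^ 2 * deriv x₁ t ^ 2) = 0) := by
  have hx : x₁ = fun t => σ / (Real.sqrt 3 * ε) * t + c := by
    funext t; rw [hx₁ t]; ring
  have hd : deriv x₁ = fun _ => σ / (Real.sqrt 3 * ε) := by
    funext t
    rw [hx]
    simp [deriv_add, differentiableAt_const, mul_comm]
  have hdd : deriv (deriv x₁) = fun _ => (0 : ℝ) := by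
    rw [hd]; funext t; simp
  have h3 : Real.sqrt 3 ^ 2 = 3 := Real.sq_sqrt (by norm_num)
  have hs3 : Real.sqrt 3 ≠ 0 := by positivity
  have hσ2 : σ ^ 2 = 1 := by rcases hσ with h | h <;> rw [h] <;> norm_num
  have hs : ∀ t : ℝ, 1 - ε ^ 2 * deriv x₁ t ^ 2 = 2 / 3 := by
    intro t
    rw [hd]
    simp only
    field_simp
    rw [h3]; rw [hσ2]; ring
  refine ⟨hs, fun t => ?_, fun t hQ => ?_⟩
  · rw [hs t]; norm_num [PhiBH]
  · rw [hs t, hdd]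
    simp only
    norm_num [PhiBH]
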